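/- arXiv:1901.09879 — 6 statements merged into one kernel-verified Lean document; each statement's English description precedes it below -/
import Mathlib

section
/- Let S = (D, ∅_D, I, R) be an associative right string data structure over an alphabet A, and let ≈_S be the congruence on A* generated by the rules R(d)R(d') → R(d ⋆_I d') for all d, d' ∈ D with R(d ⋆_I d') ≠ R(d)R(d'). Then S presents the quotient monoid A*/≈_S, that is, the structure monoid M(D, I) is isomorphic to A*/≈_S. -/
/-- A right string data structure `S = (D, ∅_D, I, R)` over an alphabet `A`.
`I* : D × A* → D` is the left fold `fun d w => w.foldl ins d`. -/
structure RightSDS (A : Type*) (D : Type*) where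
  empty : D
  ins : D → A → D
  read : D → List A
  read_ins_empty : ∀ x : A, read (ins empty x) = [x]
  fold_read : ∀ d : D, (read d).foldl ins empty = d
  cons_surj : Function.Surjective (fun w : List A => w.foldl ins empty)
  read_inj : Function.Injective read
  read_empty : read empty = []

namespace RightSDS

variable {A D : Type*}

/-- The product `d ⋆_I d' := I*(d, R d')` on `D`. -/
def star (S : RightSDS A D) (d d' : D) : D := (S.read d').foldl S.ins d

/-- The string data structure is associative when `⋆_I` is associative. -/
def Assoc (S : RightSDS A D) : Prop :=
  ∀ a b c : D, S.star (S.star a b) c = S.star a (S.star b c)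

end RightSDS

/-- One-step reduction relation of a string rewriting system with rules `R`. -/
def OneStep {X : Type*} (R : List X → List X → Prop) (u v : List X) : Prop :=
  ∃ w a b w', R a b ∧ u = w ++ a ++ w' ∧ v = w ++ b ++ w'

/-- A rewriting system is terminating if it has no infinite sequence of
one-step reductions. -/
def Terminating {X : Type*} (R : List X → List X → Prop) : Prop :=
  ¬ ∃ f : ℕ → List X, ∀ i : ℕ, OneStep R (f i) (f (i + 1))

/-- Reduction in zero or more steps. -/
def Reduces {X : Type*} (R : List X → List X → Prop) : List X → List X → Prop :=
  Relation.ReflTransGen (OneStep R)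

/-- Confluence of a string rewriting system. -/
def Confluent {X : Type*} (R : List X → List X → Prop) : Prop :=
  ∀ u v w, Reduces R u v → Reduces R u w → ∃ z, Reduces R v z ∧ Reduces R w z

/-- A word is a normal form if no one-step reduction applies to it. -/
def IsNF {X : Type*} (R : List X → List X → Prop) (u : List X) : Prop :=
  ∀ v, ¬ OneStep R u v

/-- The monoid congruence on the free monoid `X*` generated by the rules `R`;
the monoid presented by the rewriting system is its quotient. -/
def presCon {X : Type*} (R : List X → List X → Prop) : Con (FreeMonoid X) :=
  conGen (fun a b => R (FreeMonoid.toList a) (FreeMonoid.toList b))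

/-- The monoid presented by the rewriting system `R` is isomorphic to the
structure monoid `M(D, I) = (D, ⋆_I, ∅_D)` of `S`. -/
def PresentsStructure {X A D : Type*} (S : RightSDS A D)
    (R : List X → List X → Prop) : Prop :=
  ∃ e : (presCon R).Quotient ≃ D,
    e 1 = S.empty ∧ ∀ p q : (presCon R).Quotient, e (p * q) = S.star (e p) (e q)

/-- The rewriting system `Srs(R)` on the alphabet `A`, with a rule
`R(d)R(d') → R(d ⋆_I d')` for all `d, d' ∈ D` with
`R(d ⋆_I d') ≠ R(d)R(d')`. -/
def SrsR {A D : Type*} (S : RightSDS A D) : List A → List A → Prop :=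
  fun u v => ∃ d d' : D,
    u = S.read d ++ S.read d' ∧ v = S.read (S.star d d') ∧
      S.read (S.star d d') ≠ S.read d ++ S.read d'

/-- For an associative right string data structure `S`, the structure monoid
`M(D, I)` is isomorphic to the quotient of `A*` by the congruence `≈_S`
generated by the rules of `Srs(R)`: `S` presents `A*/≈_S`. -/
theorem presents_quotient_by_srsR {A D : Type*} (S : RightSDS A D)
    (hS : S.Assoc) :
    ∃ e : (presCon (SrsR S)).Quotient ≃ D,
      e 1 = S.empty ∧
        ∀ p q : (presCon (SrsR S)).Quotient, e (p * q) = S.star (e p) (e q) := by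

  classical
  letI : Monoid D :=
    { mul := S.star
      one := S.empty
      mul_assoc := hS
      one_mul := fun d => S.fold_read d
      mul_one := fun d => by show S.star d S.empty = d; simp [RightSDS.star, S.read_empty] }
  have key : ∀ (u : List A) (d : D),
      u.foldl S.ins d = S.star d (u.foldl S.ins S.empty) := by
    intro u
    induction u with
    | nil => intro d; simp [RightSDS.star, S.read_empty]
    | cons x t ih =>
      intro d
      have h1 : (x :: t).foldl S.ins d = t.foldl S.ins (S.ins d x) := rfl
      have h2 : (x :: t).foldl S.ins S.empty = t.foldl S.ins (S.ins S.empty x) := rfl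
      have h3 : S.star d (S.ins S.empty x) = S.ins d x := by
        simp [RightSDS.star, S.read_ins_empty]
      rw [h1, ih, h2, ih (S.ins S.empty x), ← hS, h3]
  have hone : ((1 : FreeMonoid A).toList.foldl S.ins S.empty) = S.empty := rfl
  have hmul : ∀ u v : FreeMonoid A,
      ((u * v).toList.foldl S.ins S.empty)
        = S.star (u.toList.foldl S.ins S.empty) (v.toList.foldl S.ins S.empty) := by
    intro u v
    have hl : (u * v).toList = u.toList ++ v.toList := rfl
    rw [hl, List.foldl_append, key]
  let φ : FreeMonoid A →* D :=
    { toFun := fun w => w.toList.foldl S.ins S.empty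
      map_one' := hone
      map_mul' := hmul }
  have hφ : ∀ w : FreeMonoid A, φ w = w.toList.foldl S.ins S.empty := fun _ => rfl
  have hle : presCon (SrsR S) ≤ Con.ker φ := by
    apply Con.conGen_le.mpr
    rintro a b ⟨d, d', ha, hb, hne⟩
    rw [Con.ker_rel]
    have h1 : φ a = S.star d d' := by
      rw [hφ, ha, List.foldl_append, S.fold_read]; rfl
    have h2 : φ b = S.star d d' := by
      rw [hφ, hb, S.fold_read]
    rw [h1, h2]
  let ψ : (presCon (SrsR S)).Quotient →* D := Con.lift _ φ hle
  have hψ : ∀ w : FreeMonoid A, ψ ((presCon (SrsR S)).mk' w) = φ w := fun w => rfl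
  have hrel : ∀ w : List A,
      presCon (SrsR S) (FreeMonoid.ofList (S.read (w.foldl S.ins S.empty)))
        (FreeMonoid.ofList w) := by
    intro w
    induction w with
    | nil =>
      have : S.read (([] : List A).foldl S.ins S.empty) = [] := S.read_empty
      rw [this]
      exact (presCon (SrsR S)).refl _
    | cons x t ih =>
      set d := S.ins S.empty x with hd
      set d' := t.foldl S.ins S.empty with hd'
      have hc : (x :: t).foldl S.ins S.empty = S.star d d' := by
        have : (x :: t).foldl S.ins S.empty = t.foldl S.ins d := rfl
        rw [this, key]
      rw [hc]
      have stepA : presCon (SrsR S) (FreeMonoid.ofList (S.read (S.star d d')))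
          (FreeMonoid.ofList (S.read d ++ S.read d')) := by
        by_cases heq : S.read (S.star d d') = S.read d ++ S.read d'
        · rw [heq]; exact (presCon (SrsR S)).refl _
        · exact ((presCon (SrsR S)).symm
            (ConGen.Rel.of (FreeMonoid.ofList (S.read d ++ S.read d'))
              (FreeMonoid.ofList (S.read (S.star d d'))) ⟨d, d', rfl, rfl, heq⟩))
      have hsplit : FreeMonoid.ofList (S.read d ++ S.read d')
          = FreeMonoid.ofList (S.read d) * FreeMonoid.ofList (S.read d') := rfl
      have stepB : presCon (SrsR S)
          (FreeMonoid.ofList (S.read d) * FreeMonoid.ofList (S.read d'))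
          (FreeMonoid.ofList (S.read d) * FreeMonoid.ofList t) :=
        (presCon (SrsR S)).mul ((presCon (SrsR S)).refl _) ih
      have hx : FreeMonoid.ofList (S.read d) * FreeMonoid.ofList t
          = FreeMonoid.ofList (x :: t) := by
        rw [hd, S.read_ins_empty]; rfl
      exact ((stepA.trans (hsplit ▸ stepB)).trans (hx ▸ (presCon (SrsR S)).refl _))
  let g : D → (presCon (SrsR S)).Quotient :=
    fun d => (presCon (SrsR S)).mk' (FreeMonoid.ofList (S.read d))
  have hgr : Function.RightInverse g ψ := by
    intro d
    show ψ ((presCon (SrsR S)).mk' (FreeMonoid.ofList (S.read d))) = d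
    rw [hψ, hφ]
    exact S.fold_read d
  have hgl : Function.LeftInverse g ψ := by
    intro q
    induction q using Con.induction_on with
    | H w =>
      show g (ψ ((presCon (SrsR S)).mk' w)) = (presCon (SrsR S)).mk' w
      rw [hψ, hφ]
      exact (Con.eq _).mpr (hrel w.toList)
  refine ⟨{ toFun := ψ, invFun := g, left_inv := hgl, right_inv := hgr }, ?_, ?_⟩
  · exact map_one ψ
  · intro p q
    exact map_mul ψ p q
end

section
/- Let (D, ∅_D, I, J, R) be a string data bistructure over an alphabet A. Then for every word w ∈ A*, the left fold of I and the right fold of J applied to w starting from ∅_D coincide: I*(∅_D, w) = J*(w, ∅_D). -/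
/-- A string data bistructure `(D, ∅_D, I, J, R)` over an alphabet `A`:
`(D, ∅_D, I, R)` is a right string data structure (with insertion map the left
fold `I*`), `(D, ∅_D, J, R)` is a left string data structure (with insertion
map the right fold `J*`), and `I` and `J` commute. -/
structure SDBistructure (A : Type*) (D : Type*) where
  empty : D
  insI : D → A → D
  insJ : D → A → D
  read : D → List A
  read_insI_empty : ∀ x : A, read (insI empty x) = [x]
  foldI_read : ∀ d : D, (read d).foldl insI empty = d
  consI_surj : Function.Surjective (fun w : List A => w.foldl insI empty)
  read_insJ_empty : ∀ x : A, read (insJ empty x) = [x]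
  foldJ_read : ∀ d : D, (read d).foldr (fun x e => insJ e x) empty = d
  consJ_surj : Function.Surjective
    (fun w : List A => w.foldr (fun x e => insJ e x) empty)
  read_inj : Function.Injective read
  read_empty : read empty = []
  comm : ∀ (d : D) (x y : A), insJ (insI d x) y = insI (insJ d y) x

namespace SDBistructure

variable {A D : Type*}

/-- The product `d ⋆_I d' := I*(d, R d')`. -/
def starI (B : SDBistructure A D) (d d' : D) : D := (B.read d').foldl B.insI d

/-- The product `d ⋆_J d' := J*(R d', d)`. -/
def starJ (B : SDBistructure A D) (d d' : D) : D :=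
  (B.read d').foldr (fun x e => B.insJ e x) d

end SDBistructure

private lemma foldl_insJ {A D : Type*} (B : SDBistructure A D) :
    ∀ (w : List A) (d : D) (y : A),
      w.foldl B.insI (B.insJ d y) = B.insJ (w.foldl B.insI d) y := by
  intro w
  induction w with
  | nil => intro d y; rfl
  | cons x u ih => intro d y; simp [List.foldl, ← B.comm, ih]

/-- For a string data bistructure, the left fold of `I` and the right fold of
`J` applied to any word `w`, starting from `∅_D`, coincide:
`I*(∅_D, w) = J*(w, ∅_D)`. -/
theorem foldI_eq_foldJ {A D : Type*} (B : SDBistructure A D) :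
    ∀ w : List A,
      w.foldl B.insI B.empty = w.foldr (fun x e => B.insJ e x) B.empty := by
  intro w
  induction w with
  | nil => rfl
  | cons x u ih =>
    have hx : B.insI B.empty x = B.insJ B.empty x :=
      B.read_inj (by rw [B.read_insI_empty, B.read_insJ_empty])
    simp [List.foldl, List.foldr, ← ih, hx, ← foldl_insJ B u B.empty x]
end

section
/- Let (D, ∅_D, I, J, R) be a string data bistructure over an alphabet A, with products d ⋆_I d' := I*(d, R(d')) and d ⋆_J d' := J*(R(d'), d). Then both ⋆_I and ⋆_J are associative, and d ⋆_I d' = d' ⋆_J d holds for all d, d' ∈ D. -/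
namespace SDBistructure

variable {A D : Type*} (B : SDBistructure A D)

lemma comm_fold (u : List A) : ∀ (d : D) (x : A),
    u.foldl B.insI (B.insJ d x) = B.insJ (u.foldl B.insI d) x := by
  induction u with
  | nil => intro d x; rfl
  | cons y u ih => intro d x; simp [List.foldl_cons, ← B.comm, ih]

lemma insI_empty_eq_insJ_empty (x : A) : B.insI B.empty x = B.insJ B.empty x :=
  B.read_inj (by rw [B.read_insI_empty, B.read_insJ_empty])

lemma phi_eq_psi : ∀ w : List A,
    w.foldl B.insI B.empty = w.foldr (fun x e => B.insJ e x) B.empty := by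
  intro w
  induction w with
  | nil => rfl
  | cons x u ih =>
    rw [List.foldl_cons, List.foldr_cons, ← ih, B.insI_empty_eq_insJ_empty,
      B.comm_fold]

lemma phi_append (u v : List A) :
    (u ++ v).foldl B.insI B.empty = v.foldl B.insI (u.foldl B.insI B.empty) :=
  List.foldl_append ..

lemma psi_append (u v : List A) :
    (u ++ v).foldr (fun x e => B.insJ e x) B.empty
      = u.foldr (fun x e => B.insJ e x)
          (v.foldr (fun x e => B.insJ e x) B.empty) :=
  List.foldr_append ..

lemma phi_read_phi (w : List A) :
    (B.read (w.foldl B.insI B.empty)).foldl B.insI B.empty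
      = w.foldl B.insI B.empty := B.foldI_read _

lemma starI_eq (a b : D) :
    B.starI a b = (B.read a ++ B.read b).foldl B.insI B.empty := by
  rw [starI, phi_append, B.foldI_read]

lemma starJ_eq (a b : D) :
    B.starJ a b = (B.read b ++ B.read a).foldl B.insI B.empty := by
  rw [starJ, phi_eq_psi, psi_append, B.foldJ_read]

lemma phi_read_left (w v : List A) :
    (B.read (w.foldl B.insI B.empty) ++ v).foldl B.insI B.empty
      = (w ++ v).foldl B.insI B.empty := by
  rw [phi_append, phi_append, B.phi_read_phi]

lemma phi_read_right (w v : List A) :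
    (v ++ B.read (w.foldl B.insI B.empty)).foldl B.insI B.empty
      = (v ++ w).foldl B.insI B.empty := by
  rw [phi_eq_psi, psi_append, B.phi_eq_psi w, B.foldJ_read, ← psi_append,
    ← phi_eq_psi]

end SDBistructure

/-- For a string data bistructure, both products `⋆_I` and `⋆_J` are
associative, and `d ⋆_I d' = d' ⋆_J d` holds for all `d, d' ∈ D`. -/
theorem starI_starJ_assoc_opposite {A D : Type*} (B : SDBistructure A D) :
    (∀ a b c : D, B.starI (B.starI a b) c = B.starI a (B.starI b c)) ∧
    (∀ a b c : D, B.starJ (B.starJ a b) c = B.starJ a (B.starJ b c)) ∧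
    (∀ d d' : D, B.starI d d' = B.starJ d' d) := by
  refine ⟨?_, ?_, ?_⟩
  · intro a b c
    rw [B.starI_eq (B.starI a b) c, B.starI_eq a (B.starI b c), B.starI_eq a b,
      B.starI_eq b c, B.phi_read_left, B.phi_read_right, List.append_assoc]
  · intro a b c
    rw [B.starJ_eq (B.starJ a b) c, B.starJ_eq a (B.starJ b c), B.starJ_eq a b,
      B.starJ_eq b c, B.phi_read_left, B.phi_read_right, List.append_assoc]
  · intro d d'
    rw [B.starI_eq, B.starJ_eq]
end

section
/- Let (D, ∅_D, I, J, R) be a string data bistructure over an alphabet A. Then the structure monoids M(D, I) = (D, ⋆_I, ∅_D) and M(D, J) = (D, ⋆_J, ∅_D) are anti-isomorphic: M(D, I) is isomorphic to the opposite monoid of M(D, J), and the identity map of D is such an anti-isomorphism. -/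
namespace SDBistructure

variable {A D : Type*}

lemma insI_foldJ (B : SDBistructure A D) (v : List A) (d : D) (x : A) :
    B.insI (v.foldr (fun y e => B.insJ e y) d) x
      = v.foldr (fun y e => B.insJ e y) (B.insI d x) := by
  induction v with
  | nil => rfl
  | cons y v ih => simp [List.foldr, ← B.comm, ih]

lemma fold_comm (B : SDBistructure A D) (w v : List A) (d : D) :
    w.foldl B.insI (v.foldr (fun y e => B.insJ e y) d)
      = v.foldr (fun y e => B.insJ e y) (w.foldl B.insI d) := by
  induction w generalizing d with
  | nil => rfl
  | cons x w ih => simp [List.foldl, B.insI_foldJ, ih]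

lemma starI_eq_starJ (B : SDBistructure A D) (d d' : D) :
    B.starI d d' = B.starJ d' d := by
  conv_lhs => rw [starI, ← B.foldJ_read d]
  rw [B.fold_comm, B.foldI_read]
  rfl

end SDBistructure

/-- For a string data bistructure, the structure monoids
`M(D, I) = (D, ⋆_I, ∅_D)` and `M(D, J) = (D, ⋆_J, ∅_D)` are monoids and are
anti-isomorphic, the identity map of `D` being an anti-isomorphism:
`d ⋆_I d' = d' ⋆_J d`, so `M(D, I)` is isomorphic to the opposite of
`M(D, J)`. -/
theorem structure_monoids_anti_isomorphic {A D : Type*} (B : SDBistructure A D) :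
    (∀ a b c : D, B.starI (B.starI a b) c = B.starI a (B.starI b c)) ∧
    (∀ a b c : D, B.starJ (B.starJ a b) c = B.starJ a (B.starJ b c)) ∧
    (∀ d : D, B.starI B.empty d = d ∧ B.starI d B.empty = d) ∧
    (∀ d : D, B.starJ B.empty d = d ∧ B.starJ d B.empty = d) ∧
    (∀ d d' : D, B.starI d d' = B.starJ d' d) := by
  have assocI : ∀ a b c : D, B.starI (B.starI a b) c = B.starI a (B.starI b c) := by
    intro a b c
    have ha : a = (B.read a).foldr (fun y e => B.insJ e y) B.empty :=
      (B.foldJ_read a).symm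
    have key : ∀ d : D, B.starI a d
        = (B.read a).foldr (fun y e => B.insJ e y) d := by
      intro d
      conv_lhs => rw [SDBistructure.starI, ha, B.fold_comm, B.foldI_read]
    have lhs : B.starI (B.starI a b) c
        = (B.read a).foldr (fun y e => B.insJ e y) ((B.read c).foldl B.insI b) := by
      conv_lhs => rw [SDBistructure.starI, SDBistructure.starI, ha, B.fold_comm,
        B.fold_comm, B.foldI_read]
    rw [lhs, key]; rfl
  refine ⟨assocI, ?_, ?_, ?_, B.starI_eq_starJ⟩
  · intro a b c
    rw [← B.starI_eq_starJ, ← B.starI_eq_starJ, ← B.starI_eq_starJ,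
      ← B.starI_eq_starJ, assocI]
  · intro d
    exact ⟨B.foldI_read d, by simp [SDBistructure.starI, B.read_empty]⟩
  · intro d
    constructor
    · rw [← B.starI_eq_starJ]; simp [SDBistructure.starI, B.read_empty]
    · rw [← B.starI_eq_starJ]; exact B.foldI_read d
end

section
/- Let (D, ∅_D, I, J, R) be a string data bistructure over an alphabet A, and let ι(x) := I(∅_D, x) for x ∈ A (which equals J(∅_D, x)). Then for all d ∈ D and x ∈ A: (1) I(d, x) = J*(R(d), ι(x)), and (2) J(d, x) = I*(ι(x), R(d)); that is, each insertion map is determined by the other one together with the reading map. -/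

lemma aux_foldr {A D : Type*} (B : SDBistructure A D) (w : List A) (d : D) (x : A) :
    B.insI (w.foldr (fun a e => B.insJ e a) d) x
      = w.foldr (fun a e => B.insJ e a) (B.insI d x) := by
  induction w generalizing d with
  | nil => rfl
  | cons a t ih => simp [List.foldr, ← B.comm, ih]

lemma aux_foldl {A D : Type*} (B : SDBistructure A D) (w : List A) (d : D) (x : A) :
    B.insJ (w.foldl B.insI d) x = w.foldl B.insI (B.insJ d x) := by
  induction w generalizing d with
  | nil => rfl
  | cons a t ih => simp [List.foldl, B.comm, ih]

/-- For a string data bistructure, with `ι(x) := I(∅_D, x)` (which equals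
`J(∅_D, x)`), each insertion is determined by the other together with the
reading map: `I(d, x) = J*(R(d), ι(x))` and `J(d, x) = I*(ι(x), R(d))`. -/
theorem insertions_determine_each_other {A D : Type*} (B : SDBistructure A D) :
    (∀ x : A, B.insI B.empty x = B.insJ B.empty x) ∧
    (∀ (d : D) (x : A),
      B.insI d x = (B.read d).foldr (fun a e => B.insJ e a) (B.insI B.empty x)) ∧
    (∀ (d : D) (x : A),
      B.insJ d x = (B.read d).foldl B.insI (B.insI B.empty x)) := by
  refine ⟨fun x => B.read_inj (by rw [B.read_insI_empty, B.read_insJ_empty]), ?_, ?_⟩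
  · intro d x
    conv_lhs => rw [← B.foldJ_read d]
    rw [aux_foldr]
  · intro d x
    conv_lhs => rw [← B.foldI_read d]
    rw [aux_foldl]
    congr 1
    exact B.read_inj (by rw [B.read_insI_empty, B.read_insJ_empty])
end

section
/- For every n ≥ 1, the rewriting system PreColo_2(n) on the alphabet Q_n, with rules Γ₂(n) ∪ Δ₂(n), is a finite semi-quadratic presentation of the Chinese monoid C_n: every rule has source of length 2 (after identifying letters of [n] with the corresponding generators c_x, the rules of Γ₂(n) have source of length 2 over the generators c_x) and target of length at most 2, and the monoid presented by PreColo_2(n) is isomorphic to C_n. -/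
/-! Chinese staircases over `[n] = {1, …, n}` are represented as functions
`t : ℕ → ℕ → ℕ`, where `t i j` is the entry in row `i` and column `j`
(only the entries with `1 ≤ j ≤ i ≤ n` are relevant, the others vanish). -/

/-- Update entry `(i, j)` of a staircase by applying `f`. -/
def updE (t : ℕ → ℕ → ℕ) (i j : ℕ) (f : ℕ → ℕ) : ℕ → ℕ → ℕ :=
  fun a b => if a = i ∧ b = j then f (t a b) else t a b

/-- `t` is a Chinese staircase over `[n]`: entries outside the triangle
`1 ≤ j ≤ i ≤ n` vanish. -/
def IsStaircase (n : ℕ) (t : ℕ → ℕ → ℕ) : Prop :=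
  ∀ i j : ℕ, ¬(1 ≤ j ∧ j ≤ i ∧ i ≤ n) → t i j = 0

/-- The greatest `j ∈ [1, n]` with `t n j ≠ 0`, or `x` if row `n` is zero. -/
def maxCol (t : ℕ → ℕ → ℕ) (n x : ℕ) : ℕ :=
  (((Finset.Icc 1 n).filter (fun j => t n j ≠ 0)).max).unbotD x

/-- The least `j ∈ [1, i]` with `t i j ≠ 0`, or `i` if row `i` is zero. -/
def minCol (t : ℕ → ℕ → ℕ) (i : ℕ) : ℕ :=
  (((Finset.Icc 1 i).filter (fun j => t i j ≠ 0)).min).untopD i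

/-- The right insertion `C_r` of a letter `x` into a staircase over `[n]`. -/
def Cr : ℕ → (ℕ → ℕ → ℕ) → ℕ → (ℕ → ℕ → ℕ)
  | 0, t, _ => t
  | n + 1, t, x =>
    if x = n + 1 then updE t (n + 1) (n + 1) (· + 1)
    else
      if maxCol t (n + 1) x ≤ x then Cr n t x
      else if maxCol t (n + 1) x < n + 1 then
        Cr n (updE (updE t (n + 1) (maxCol t (n + 1) x) (· - 1)) (n + 1) x (· + 1))
          (maxCol t (n + 1) x)
      else updE (updE t (n + 1) (n + 1) (· - 1)) (n + 1) x (· + 1)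

/-- One step, at row `i`, of the first phase of the left insertion `C_l`;
the state is a pair of the current staircase and `y ∈ [n] ∪ {λ}`. -/
def ClStep (s : (ℕ → ℕ → ℕ) × Option ℕ) (i : ℕ) : (ℕ → ℕ → ℕ) × Option ℕ :=
  if ∀ j ∈ Finset.Icc 1 i, s.1 i j = 0 then s
  else
    match s.2 with
    | none =>
        if minCol s.1 i < i then
          (updE (updE s.1 i (minCol s.1 i) (· - 1)) i i (· + 1), some (minCol s.1 i))
        else (updE s.1 i i (· - 1), some (minCol s.1 i))
    | some y0 =>
        if minCol s.1 i < y0 then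
          (updE (updE s.1 i (minCol s.1 i) (· - 1)) i y0 (· + 1), some (minCol s.1 i))
        else (s.1, some y0)

/-- The first phase of `C_l`, on rows `1, …, k`, with initial state `(t, λ)`. -/
def ClLoop (t : ℕ → ℕ → ℕ) (k : ℕ) : (ℕ → ℕ → ℕ) × Option ℕ :=
  (List.range k).foldl (fun s m => ClStep s (m + 1)) (t, none)

/-- The left insertion `C_l` of a letter `x` into a staircase. -/
def Cl (t : ℕ → ℕ → ℕ) (x : ℕ) : ℕ → ℕ → ℕ :=
  match ClLoop t (x - 1) with
  | (t', none) => updE t' x x (· + 1)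
  | (t', some y0) => updE t' x y0 (· + 1)

/-- The row reading of row `i`: the word
`(i1)^{t_{i1}} (i2)^{t_{i2}} ⋯ (i(i-1))^{t_{i(i-1)}} (i)^{t_i}`. -/
def rowWord (t : ℕ → ℕ → ℕ) (i : ℕ) : List ℕ :=
  ((List.range (i - 1)).map fun k =>
      (List.replicate (t i (k + 1)) [i, k + 1]).flatten).flatten
    ++ List.replicate (t i i) i

/-- The row reading `R_r` of a staircase over `[n]`, row by row from top to
bottom. -/
def Rr (n : ℕ) (t : ℕ → ℕ → ℕ) : List ℕ :=
  ((List.range n).map fun k => rowWord t (k + 1)).flatten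

/-- The product `t ⋆_{C_r} t'`: the left fold of `C_r` over the letters of
`R_r t'` starting from `t`. -/
def starCr (n : ℕ) (t t' : ℕ → ℕ → ℕ) : ℕ → ℕ → ℕ :=
  (Rr n t').foldl (Cr n) t

/-- The column generator `c_{yx}` (or `c_x` when `y = x`): single entry `1`
at `(y, x)`. -/
def colG (y x : ℕ) : ℕ → ℕ → ℕ := fun a b => if a = y ∧ b = x then 1 else 0

/-- The square generator `c_{xx}`: single entry `2` at `(x, x)`. -/
def sqG (x : ℕ) : ℕ → ℕ → ℕ := fun a b => if a = x ∧ b = x then 2 else 0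

/-- The generator `c_x`. -/
def cOf (x : ℕ) : ℕ → ℕ → ℕ := colG x x

/-- `c_{yx}` where, for `y = x`, `c_{xx}` denotes the square generator. -/
def genYX (y x : ℕ) : ℕ → ℕ → ℕ := if y = x then sqG x else colG y x

/-- The set `Q_n` of column and square generators. -/
def Qn (n : ℕ) : Set (ℕ → ℕ → ℕ) :=
  {c | (∃ x y : ℕ, 1 ≤ x ∧ x < y ∧ y ≤ n ∧ c = colG y x) ∨
       (∃ x : ℕ, 1 ≤ x ∧ x ≤ n ∧ c = colG x x) ∨
       (∃ x : ℕ, 1 < x ∧ x < n ∧ c = sqG x)}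

/-- The alphabet `Q_n`. -/
abbrev QL (n : ℕ) : Type := {c : ℕ → ℕ → ℕ // c ∈ Qn n}

/-- The `Q_n`-reading of row `i` of a staircase:
`c_{i1}^{t_{i1}} ⋯ c_{i(i-1)}^{t_{i(i-1)}}` followed by `c_{ii}^{t_i/2}` if
`t_i` is even and by `c_i · c_{ii}^{(t_i - 1)/2}` if `t_i` is odd. -/
def rowQ (t : ℕ → ℕ → ℕ) (i : ℕ) : List (ℕ → ℕ → ℕ) :=
  ((List.range (i - 1)).map fun k =>
      List.replicate (t i (k + 1)) (colG i (k + 1))).flatten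
    ++ (if t i i % 2 = 0 then List.replicate (t i i / 2) (sqG i)
        else colG i i :: List.replicate ((t i i - 1) / 2) (sqG i))

/-- The reading `R_{Q_n}` of a staircase, row by row from top to bottom, as a
word of generators. -/
def RQnWord (n : ℕ) (t : ℕ → ℕ → ℕ) : List (ℕ → ℕ → ℕ) :=
  ((List.range n).map fun k => rowQ t (k + 1)).flatten

/-- The rewriting system `Srs(Q_n, SdsC_n)` on the alphabet `Q_n`, with rules
`c_u·c_v → R_{Q_n}(c_u ⋆_{C_r} c_v)` whenever
`c_u·c_v ≠ R_{Q_n}(c_u ⋆_{C_r} c_v)`. Words over `Q_n` are encoded as lists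
of elements of the subtype `QL n`, compared through their underlying
staircases. -/
def SrsQn (n : ℕ) (u v : List (QL n)) : Prop :=
  ∃ c c' : QL n, u = [c, c'] ∧
    v.map Subtype.val = RQnWord n (starCr n c.1 c'.1) ∧
    u.map Subtype.val ≠ RQnWord n (starCr n c.1 c'.1)

/-- The leftmost one-step reduction: a reduction whose left context is of
minimal length among all reductions with the same source. -/
def LStep {X : Type*} (R : List X → List X → Prop) (u v : List X) : Prop :=
  ∃ w a b w', R a b ∧ u = w ++ a ++ w' ∧ v = w ++ b ++ w' ∧
    ∀ w₂ a₂ b₂ w₂', R a₂ b₂ → u = w₂ ++ a₂ ++ w₂' → w.length ≤ w₂.length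

/-- The rightmost one-step reduction: a reduction whose left context is of
maximal length among all reductions with the same source. -/
def RStep {X : Type*} (R : List X → List X → Prop) (u v : List X) : Prop :=
  ∃ w a b w', R a b ∧ u = w ++ a ++ w' ∧ v = w ++ b ++ w' ∧
    ∀ w₂ a₂ b₂ w₂', R a₂ b₂ → u = w₂ ++ a₂ ++ w₂' → w₂.length ≤ w.length

/-- `IterRel r k a b`: there is a path of length exactly `k` from `a` to `b`
along the relation `r`. -/
def IterRel {α : Type*} (r : α → α → Prop) : ℕ → α → α → Prop
  | 0, a, b => a = b
  | k + 1, a, c => ∃ b, r a b ∧ IterRel r k b c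

/-- The alphabet `[n]` of the Chinese monoid. -/
abbrev ChLetter (n : ℕ) : Type := {x : ℕ // 1 ≤ x ∧ x ≤ n}

/-- The Chinese congruence on `[n]*`, generated by the relations
`zyx = zxy = yzx` for all `1 ≤ x ≤ y ≤ z ≤ n`; the Chinese monoid `C_n` is
its quotient. -/
def ChineseCon (n : ℕ) : Con (FreeMonoid (ChLetter n)) :=
  conGen (fun u v => ∃ x y z : ChLetter n, x.1 ≤ y.1 ∧ y.1 ≤ z.1 ∧
    ((u = FreeMonoid.ofList [z, y, x] ∧ v = FreeMonoid.ofList [z, x, y]) ∨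
     (u = FreeMonoid.ofList [z, y, x] ∧ v = FreeMonoid.ofList [y, z, x])))

/-- The rewriting system `PreColo_2(n)` on the alphabet `Q_n`, with the rules
`Γ₂(n) ∪ Δ₂(n)`. Words over `Q_n` are encoded as lists of elements of the
subtype `QL n`, compared through their underlying staircases. -/
def PreColo (n : ℕ) (u v : List (QL n)) : Prop :=
  -- γ_{y,x} : c_y·c_x → c_{yx}, for 1 ≤ x < y ≤ n
  (∃ x y : ℕ, 1 ≤ x ∧ x < y ∧ y ≤ n ∧
      u.map Subtype.val = [cOf y, cOf x] ∧ v.map Subtype.val = [colG y x]) ∨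
  -- γ_{x,x} : c_x·c_x → c_{xx}, for 1 < x < n
  (∃ x : ℕ, 1 < x ∧ x < n ∧
      u.map Subtype.val = [cOf x, cOf x] ∧ v.map Subtype.val = [sqG x]) ∨
  -- γ_{y,yx} : c_y·c_{yx} → c_{yx}·c_y, for 1 ≤ x < y ≤ n
  (∃ x y : ℕ, 1 ≤ x ∧ x < y ∧ y ≤ n ∧
      u.map Subtype.val = [cOf y, colG y x] ∧
      v.map Subtype.val = [colG y x, cOf y]) ∨
  -- γ_{yy,x} : c_{yy}·c_x → c_{yx}·c_y, for 1 ≤ x < y < n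
  (∃ x y : ℕ, 1 ≤ x ∧ x < y ∧ y < n ∧
      u.map Subtype.val = [sqG y, cOf x] ∧
      v.map Subtype.val = [colG y x, cOf y]) ∨
  -- γ_{zy,x} : c_{zy}·c_x → c_y·c_{zx}, for 1 ≤ x ≤ y < z ≤ n
  (∃ x y z : ℕ, 1 ≤ x ∧ x ≤ y ∧ y < z ∧ z ≤ n ∧
      u.map Subtype.val = [colG z y, cOf x] ∧
      v.map Subtype.val = [cOf y, colG z x]) ∨
  -- γ_{z,yx} : c_z·c_{yx} → c_y·c_{zx}, for 1 ≤ x ≤ y < z ≤ n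
  (∃ x y z : ℕ, 1 ≤ x ∧ x ≤ y ∧ y < z ∧ z ≤ n ∧
      u.map Subtype.val = [cOf z, genYX y x] ∧
      v.map Subtype.val = [cOf y, colG z x]) ∨
  -- γ_{zx,y} : c_{zx}·c_y → c_y·c_{zx}, for 1 ≤ x < y < z ≤ n
  (∃ x y z : ℕ, 1 ≤ x ∧ x < y ∧ y < z ∧ z ≤ n ∧
      u.map Subtype.val = [colG z x, cOf y] ∧
      v.map Subtype.val = [cOf y, colG z x])

section AuxPreColo

open FreeMonoid

private lemma flatten_nil' {α : Type*} (f : ℕ → List α) (m : ℕ)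
    (h : ∀ k < m, f k = []) : ((List.range m).map f).flatten = [] := by
  induction m with
  | zero => simp
  | succ m ih =>
    rw [List.range_succ, List.map_append, List.flatten_append,
      List.map_cons, List.map_nil, List.flatten_cons, List.flatten_nil]
    rw [ih (fun k hk => h k (by omega)), h m (by omega)]
    simp

private lemma flatten_single {α : Type*} (f : ℕ → List α) (m j : ℕ) (hj : j < m)
    (h : ∀ k < m, k ≠ j → f k = []) : ((List.range m).map f).flatten = f j := by
  induction m with
  | zero => omega
  | succ m ih =>
    rw [List.range_succ, List.map_append, List.flatten_append,
      List.map_cons, List.map_nil, List.flatten_cons, List.flatten_nil]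
    rcases Nat.lt_or_ge j m with hjm | hjm
    · rw [ih hjm (fun k hk hkj => h k (by omega) hkj), h m (by omega) (by omega)]
      simp
    · have hjm' : j = m := by omega
      subst hjm'
      rw [flatten_nil' f j (fun k hk => h k (by omega) (by omega))]
      simp

private lemma rowWord_zero_row (t : ℕ → ℕ → ℕ) (i : ℕ) (h : ∀ j, t i j = 0) :
    rowWord t i = [] := by
  unfold rowWord
  rw [h, flatten_nil']
  · simp
  · intro k hk
    rw [h]
    simp

private lemma Rr_colG {n y x : ℕ} (h1 : 1 ≤ x) (h2 : x < y) (h3 : y ≤ n) :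
    Rr n (colG y x) = [y, x] := by
  have hrow : rowWord (colG y x) y = [y, x] := by
    unfold rowWord
    have h4 : colG y x y y = 0 := by
      show (if y = y ∧ y = x then 1 else 0) = 0
      rw [if_neg (by omega)]
    rw [h4]
    rw [flatten_single _ (y - 1) (x - 1) (by omega) ?side]
    · have hx : x - 1 + 1 = x := by omega
      rw [hx]
      have : colG y x y x = 1 := by
        show (if y = y ∧ x = x then 1 else 0) = 1
        rw [if_pos ⟨rfl, rfl⟩]
      rw [this]
      simp
    case side =>
      intro k hk hkx
      have : colG y x y (k + 1) = 0 := by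
        show (if y = y ∧ k + 1 = x then 1 else 0) = 0
        rw [if_neg (by omega)]
      rw [this]
      simp
  unfold Rr
  rw [flatten_single _ n (y - 1) (by omega) ?hrows]
  · rw [show y - 1 + 1 = y by omega, hrow]
  case hrows =>
    intro k hk hky
    apply rowWord_zero_row
    intro j
    show (if k + 1 = y ∧ j = x then 1 else 0) = 0
    rw [if_neg (by omega)]

private lemma Rr_diag {n x : ℕ} (m : ℕ) (h1 : 1 ≤ x) (h2 : x ≤ n) :
    Rr n (fun a b => if a = x ∧ b = x then m else 0) = List.replicate m x := by
  set t : ℕ → ℕ → ℕ := fun a b => if a = x ∧ b = x then m else 0 with ht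
  have hrow : rowWord t x = List.replicate m x := by
    unfold rowWord
    rw [flatten_nil' _ (x - 1) ?hcols]
    · have hdiag : t x x = m := if_pos ⟨rfl, rfl⟩
      rw [hdiag]
      simp
    case hcols =>
      intro k hk
      have : t x (k + 1) = 0 := if_neg (by omega)
      rw [this]
      simp
  unfold Rr
  rw [flatten_single _ n (x - 1) (by omega) ?hrows]
  · rw [show x - 1 + 1 = x by omega, hrow]
  case hrows =>
    intro k hk hkx
    apply rowWord_zero_row
    intro j
    exact if_neg (by omega)

private lemma Rr_cOf {n x : ℕ} (h1 : 1 ≤ x) (h2 : x ≤ n) : Rr n (cOf x) = [x] :=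
  Rr_diag 1 h1 h2

private lemma Rr_sqG {n x : ℕ} (h1 : 1 ≤ x) (h2 : x ≤ n) : Rr n (sqG x) = [x, x] :=
  Rr_diag 2 h1 h2

/-! ### Injectivity facts for generators -/

private lemma colG_apply (y x a b : ℕ) :
    colG y x a b = if a = y ∧ b = x then 1 else 0 := rfl

/-! ### the embedding [n] → ChLetter n -/

private def emL (n : ℕ) (hn : 1 ≤ n) (m : ℕ) : ChLetter n :=
  if h : 1 ≤ m ∧ m ≤ n then ⟨m, h⟩ else ⟨1, le_rfl, hn⟩

private lemma emL_eq (n : ℕ) (hn : 1 ≤ n) {m : ℕ} (h1 : 1 ≤ m) (h2 : m ≤ n) :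
    emL n hn m = ⟨m, h1, h2⟩ := dif_pos ⟨h1, h2⟩

/-! ### The morphism to the Chinese monoid -/

private def fCh (n : ℕ) (hn : 1 ≤ n) (c : QL n) : (ChineseCon n).Quotient :=
  (ChineseCon n).mk' (FreeMonoid.ofList ((Rr n c.1).map (emL n hn)))

private def phiF (n : ℕ) (hn : 1 ≤ n) : FreeMonoid (QL n) →* (ChineseCon n).Quotient :=
  FreeMonoid.lift (fCh n hn)

private lemma fCh_cOf (n : ℕ) (hn : 1 ≤ n) (c : QL n) {y : ℕ} (hc : c.1 = cOf y)
    (h1 : 1 ≤ y) (h2 : y ≤ n) :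
    fCh n hn c = (ChineseCon n).mk' (FreeMonoid.ofList [⟨y, h1, h2⟩]) := by
  unfold fCh
  rw [hc, Rr_cOf h1 h2, List.map_cons, List.map_nil, emL_eq n hn h1 h2]

private lemma fCh_colG (n : ℕ) (hn : 1 ≤ n) (c : QL n) {y x : ℕ} (hc : c.1 = colG y x)
    (h1 : 1 ≤ x) (h2 : x < y) (h3 : y ≤ n) :
    fCh n hn c = (ChineseCon n).mk'
      (FreeMonoid.ofList [⟨y, by omega, h3⟩, ⟨x, h1, by omega⟩]) := by
  unfold fCh
  rw [hc, Rr_colG h1 h2 h3, List.map_cons, List.map_cons, List.map_nil,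
    emL_eq n hn (show 1 ≤ y by omega) h3, emL_eq n hn h1 (show x ≤ n by omega)]

private lemma fCh_sqG (n : ℕ) (hn : 1 ≤ n) (c : QL n) {x : ℕ} (hc : c.1 = sqG x)
    (h1 : 1 ≤ x) (h2 : x ≤ n) :
    fCh n hn c = (ChineseCon n).mk'
      (FreeMonoid.ofList [⟨x, h1, h2⟩, ⟨x, h1, h2⟩]) := by
  unfold fCh
  rw [hc, Rr_sqG h1 h2, List.map_cons, List.map_cons, List.map_nil,
    emL_eq n hn h1 h2]

/-! ### Chinese congruence base facts -/

private lemma ch1 (n : ℕ) {x y z : ChLetter n} (hxy : x.1 ≤ y.1) (hyz : y.1 ≤ z.1) :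
    ChineseCon n (FreeMonoid.ofList [z, y, x]) (FreeMonoid.ofList [z, x, y]) :=
  ConGen.Rel.of _ _ ⟨x, y, z, hxy, hyz, Or.inl ⟨rfl, rfl⟩⟩

private lemma ch2 (n : ℕ) {x y z : ChLetter n} (hxy : x.1 ≤ y.1) (hyz : y.1 ≤ z.1) :
    ChineseCon n (FreeMonoid.ofList [z, y, x]) (FreeMonoid.ofList [y, z, x]) :=
  ConGen.Rel.of _ _ ⟨x, y, z, hxy, hyz, Or.inr ⟨rfl, rfl⟩⟩

private lemma ch3 (n : ℕ) {x y z : ChLetter n} (hxy : x.1 ≤ y.1) (hyz : y.1 ≤ z.1) :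
    ChineseCon n (FreeMonoid.ofList [z, x, y]) (FreeMonoid.ofList [y, z, x]) :=
  (ChineseCon n).trans ((ChineseCon n).symm (ch1 n hxy hyz)) (ch2 n hxy hyz)

/-! ### list decompositions -/

private lemma list_two {n : ℕ} {l : List (QL n)} {a b : ℕ → ℕ → ℕ}
    (h : l.map Subtype.val = [a, b]) :
    ∃ c1 c2 : QL n, l = [c1, c2] ∧ c1.1 = a ∧ c2.1 = b := by
  match l with
  | [c1, c2] =>
    simp only [List.map_cons, List.map_nil, List.cons.injEq, and_true] at h
    exact ⟨c1, c2, rfl, h.1, h.2⟩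

private lemma list_one {n : ℕ} {l : List (QL n)} {a : ℕ → ℕ → ℕ}
    (h : l.map Subtype.val = [a]) :
    ∃ c1 : QL n, l = [c1] ∧ c1.1 = a := by
  match l with
  | [c1] =>
    simp only [List.map_cons, List.map_nil, List.cons.injEq, and_true] at h
    exact ⟨c1, rfl, h⟩

private lemma phiF_two (n : ℕ) (hn : 1 ≤ n) (c1 c2 : QL n) :
    phiF n hn (FreeMonoid.ofList [c1, c2]) = fCh n hn c1 * fCh n hn c2 := by
  show phiF n hn (FreeMonoid.of c1 * FreeMonoid.of c2) = _
  rw [map_mul]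
  unfold phiF
  rw [FreeMonoid.lift_eval_of, FreeMonoid.lift_eval_of]

private lemma phiF_one (n : ℕ) (hn : 1 ≤ n) (c1 : QL n) :
    phiF n hn (FreeMonoid.ofList [c1]) = fCh n hn c1 := by
  show phiF n hn (FreeMonoid.of c1) = _
  unfold phiF
  rw [FreeMonoid.lift_eval_of]

private lemma mk_mul {M : Type*} [Monoid M] (c : Con M) (a b : M) :
    c.mk' a * c.mk' b = c.mk' (a * b) := (map_mul _ _ _).symm

end AuxPreColo
section AuxPreColo2

open FreeMonoid

/-! ### φ respects the rules of `PreColo` -/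

private lemma phi_resp (n : ℕ) (hn : 1 ≤ n) :
    presCon (PreColo n) ≤ Con.ker (phiF n hn) := by
  apply Con.conGen_le.mpr
  intro u v h
  rw [Con.ker_rel]
  rcases h with ⟨x, y, hx, hxy, hyn, hu, hv⟩ | ⟨x, hx1, hxn, hu, hv⟩ |
    ⟨x, y, hx, hxy, hyn, hu, hv⟩ | ⟨x, y, hx, hxy, hyn, hu, hv⟩ |
    ⟨x, y, z, hx, hxy, hyz, hzn, hu, hv⟩ | ⟨x, y, z, hx, hxy, hyz, hzn, hu, hv⟩ |
    ⟨x, y, z, hx, hxy, hyz, hzn, hu, hv⟩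
  · -- γ_{y,x}
    obtain ⟨c1, c2, hu', hc1, hc2⟩ := list_two hu
    obtain ⟨d1, hv', hd1⟩ := list_one hv
    have hU : u = FreeMonoid.ofList [c1, c2] := by rw [← hu', FreeMonoid.ofList_toList]
    have hV : v = FreeMonoid.ofList [d1] := by rw [← hv', FreeMonoid.ofList_toList]
    rw [hU, hV, phiF_two, phiF_one, fCh_cOf n hn c1 hc1 (by omega) hyn,
      fCh_cOf n hn c2 hc2 hx (by omega), fCh_colG n hn d1 hd1 hx hxy hyn, mk_mul]
    rfl
  · -- γ_{x,x}
    obtain ⟨c1, c2, hu', hc1, hc2⟩ := list_two hu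
    obtain ⟨d1, hv', hd1⟩ := list_one hv
    have hU : u = FreeMonoid.ofList [c1, c2] := by rw [← hu', FreeMonoid.ofList_toList]
    have hV : v = FreeMonoid.ofList [d1] := by rw [← hv', FreeMonoid.ofList_toList]
    rw [hU, hV, phiF_two, phiF_one, fCh_cOf n hn c1 hc1 (by omega) (by omega),
      fCh_cOf n hn c2 hc2 (by omega) (by omega), fCh_sqG n hn d1 hd1 (by omega) (by omega),
      mk_mul]
    rfl
  · -- γ_{y,yx}
    obtain ⟨c1, c2, hu', hc1, hc2⟩ := list_two hu
    obtain ⟨d1, d2, hv', hd1, hd2⟩ := list_two hv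
    have hU : u = FreeMonoid.ofList [c1, c2] := by rw [← hu', FreeMonoid.ofList_toList]
    have hV : v = FreeMonoid.ofList [d1, d2] := by rw [← hv', FreeMonoid.ofList_toList]
    rw [hU, hV, phiF_two, phiF_two, fCh_cOf n hn c1 hc1 (by omega) hyn,
      fCh_colG n hn c2 hc2 hx hxy hyn, fCh_colG n hn d1 hd1 hx hxy hyn,
      fCh_cOf n hn d2 hd2 (by omega) hyn, mk_mul, mk_mul]
    exact (Con.eq _).mpr (ch1 n (Nat.le_of_lt hxy) (Nat.le_refl y))
  · -- γ_{yy,x}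
    obtain ⟨c1, c2, hu', hc1, hc2⟩ := list_two hu
    obtain ⟨d1, d2, hv', hd1, hd2⟩ := list_two hv
    have hU : u = FreeMonoid.ofList [c1, c2] := by rw [← hu', FreeMonoid.ofList_toList]
    have hV : v = FreeMonoid.ofList [d1, d2] := by rw [← hv', FreeMonoid.ofList_toList]
    rw [hU, hV, phiF_two, phiF_two, fCh_sqG n hn c1 hc1 (by omega) (by omega),
      fCh_cOf n hn c2 hc2 hx (by omega), fCh_colG n hn d1 hd1 hx hxy (by omega),
      fCh_cOf n hn d2 hd2 (by omega) (by omega), mk_mul, mk_mul]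
    exact (Con.eq _).mpr (ch1 n (Nat.le_of_lt hxy) (Nat.le_refl y))
  · -- γ_{zy,x}
    obtain ⟨c1, c2, hu', hc1, hc2⟩ := list_two hu
    obtain ⟨d1, d2, hv', hd1, hd2⟩ := list_two hv
    have hU : u = FreeMonoid.ofList [c1, c2] := by rw [← hu', FreeMonoid.ofList_toList]
    have hV : v = FreeMonoid.ofList [d1, d2] := by rw [← hv', FreeMonoid.ofList_toList]
    rw [hU, hV, phiF_two, phiF_two, fCh_colG n hn c1 hc1 (by omega) hyz hzn,
      fCh_cOf n hn c2 hc2 hx (by omega), fCh_cOf n hn d1 hd1 (by omega) (by omega),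
      fCh_colG n hn d2 hd2 hx (by omega) hzn, mk_mul, mk_mul]
    exact (Con.eq _).mpr (ch2 n hxy (Nat.le_of_lt hyz))
  · -- γ_{z,yx}
    obtain ⟨c1, c2, hu', hc1, hc2⟩ := list_two hu
    obtain ⟨d1, d2, hv', hd1, hd2⟩ := list_two hv
    have hU : u = FreeMonoid.ofList [c1, c2] := by rw [← hu', FreeMonoid.ofList_toList]
    have hV : v = FreeMonoid.ofList [d1, d2] := by rw [← hv', FreeMonoid.ofList_toList]
    rcases eq_or_lt_of_le hxy with he | hlt
    · -- x = y, the middle letter is the square generator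
      subst he
      have hc2' : c2.1 = sqG x := by rw [hc2]; exact if_pos rfl
      rw [hU, hV, phiF_two, phiF_two, fCh_cOf n hn c1 hc1 (by omega) hzn,
        fCh_sqG n hn c2 hc2' hx (by omega), fCh_cOf n hn d1 hd1 hx (by omega),
        fCh_colG n hn d2 hd2 hx hyz hzn, mk_mul, mk_mul]
      exact (Con.eq _).mpr (ch2 n (Nat.le_refl x) (Nat.le_of_lt hyz))
    · have hc2' : c2.1 = colG y x := by rw [hc2]; exact if_neg (by omega)
      rw [hU, hV, phiF_two, phiF_two, fCh_cOf n hn c1 hc1 (by omega) hzn,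
        fCh_colG n hn c2 hc2' hx hlt (by omega), fCh_cOf n hn d1 hd1 (by omega) (by omega),
        fCh_colG n hn d2 hd2 hx (by omega) hzn, mk_mul, mk_mul]
      exact (Con.eq _).mpr (ch2 n hxy (Nat.le_of_lt hyz))
  · -- γ_{zx,y}
    obtain ⟨c1, c2, hu', hc1, hc2⟩ := list_two hu
    obtain ⟨d1, d2, hv', hd1, hd2⟩ := list_two hv
    have hU : u = FreeMonoid.ofList [c1, c2] := by rw [← hu', FreeMonoid.ofList_toList]
    have hV : v = FreeMonoid.ofList [d1, d2] := by rw [← hv', FreeMonoid.ofList_toList]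
    rw [hU, hV, phiF_two, phiF_two, fCh_colG n hn c1 hc1 hx (by omega) hzn,
      fCh_cOf n hn c2 hc2 (by omega) (by omega), fCh_cOf n hn d1 hd1 (by omega) (by omega),
      fCh_colG n hn d2 hd2 hx (by omega) hzn, mk_mul, mk_mul]
    exact (Con.eq _).mpr (ch3 n (Nat.le_of_lt hxy) (Nat.le_of_lt hyz))

/-! ### The morphism from the Chinese monoid -/

private def gQ (n : ℕ) (x : ChLetter n) : QL n :=
  ⟨cOf x.1, Or.inr (Or.inl ⟨x.1, x.2.1, x.2.2, rfl⟩)⟩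

private def psiF (n : ℕ) : FreeMonoid (ChLetter n) →* (presCon (PreColo n)).Quotient :=
  FreeMonoid.lift fun x => (presCon (PreColo n)).mk' (FreeMonoid.of (gQ n x))

private lemma ofRule {n : ℕ} {u v : FreeMonoid (QL n)}
    (h : PreColo n (FreeMonoid.toList u) (FreeMonoid.toList v)) :
    presCon (PreColo n) u v := ConGen.Rel.of _ _ h

private def colQ (n x y : ℕ) (h1 : 1 ≤ x) (h2 : x < y) (h3 : y ≤ n) : QL n :=
  ⟨colG y x, Or.inl ⟨x, y, h1, h2, h3, rfl⟩⟩

private lemma pres_B (n : ℕ) {x y z : ChLetter n} (hxy : x.1 ≤ y.1) (hyz : y.1 ≤ z.1) :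
    presCon (PreColo n) (FreeMonoid.ofList [gQ n z, gQ n y, gQ n x])
      (FreeMonoid.ofList [gQ n y, gQ n z, gQ n x]) := by
  set C := presCon (PreColo n) with hC
  rcases eq_or_lt_of_le hyz with he | hyz'
  · have : y = z := Subtype.ext he
    subst this
    exact C.refl _
  rcases eq_or_lt_of_le hxy with he | hxy'
  · have : x = y := Subtype.ext he
    subst this
    have hxz : x.1 < z.1 := hyz'
    have s1 : C (FreeMonoid.ofList [gQ n z, gQ n x])
        (FreeMonoid.ofList [colQ n x.1 z.1 x.2.1 hxz z.2.2]) :=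
      ofRule (Or.inl ⟨x.1, z.1, x.2.1, hxz, z.2.2, rfl, rfl⟩)
    have s2 : C (FreeMonoid.ofList [colQ n x.1 z.1 x.2.1 hxz z.2.2, gQ n x])
        (FreeMonoid.ofList [gQ n x, colQ n x.1 z.1 x.2.1 hxz z.2.2]) :=
      ofRule (Or.inr (Or.inr (Or.inr (Or.inr (Or.inl
        ⟨x.1, x.1, z.1, x.2.1, Nat.le_refl x.1, hxz, z.2.2, rfl, rfl⟩)))))
    have t1 : C (FreeMonoid.ofList [gQ n z, gQ n x, gQ n x])
        (FreeMonoid.ofList [colQ n x.1 z.1 x.2.1 hxz z.2.2, gQ n x]) :=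
      C.mul s1 (C.refl (FreeMonoid.ofList [gQ n x]))
    have t2 : C (FreeMonoid.ofList [gQ n x, colQ n x.1 z.1 x.2.1 hxz z.2.2])
        (FreeMonoid.ofList [gQ n x, gQ n z, gQ n x]) :=
      C.mul (C.refl (FreeMonoid.ofList [gQ n x])) (C.symm s1)
    exact C.trans (C.trans t1 s2) t2
  · have hxz : x.1 < z.1 := Nat.lt_trans hxy' hyz'
    have hg : genYX y.1 x.1 = colG y.1 x.1 := if_neg (by omega)
    have u1 : C (FreeMonoid.ofList [gQ n y, gQ n x])
        (FreeMonoid.ofList [colQ n x.1 y.1 x.2.1 hxy' y.2.2]) :=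
      ofRule (Or.inl ⟨x.1, y.1, x.2.1, hxy', y.2.2, rfl, rfl⟩)
    have u2 : C (FreeMonoid.ofList [gQ n z, colQ n x.1 y.1 x.2.1 hxy' y.2.2])
        (FreeMonoid.ofList [gQ n y, colQ n x.1 z.1 x.2.1 hxz z.2.2]) := by
      refine ofRule (Or.inr (Or.inr (Or.inr (Or.inr (Or.inr (Or.inl
        ⟨x.1, y.1, z.1, x.2.1, Nat.le_of_lt hxy', hyz', z.2.2, ?_, rfl⟩))))))
      rw [hg]
      rfl
    have u3 : C (FreeMonoid.ofList [gQ n z, gQ n x])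
        (FreeMonoid.ofList [colQ n x.1 z.1 x.2.1 hxz z.2.2]) :=
      ofRule (Or.inl ⟨x.1, z.1, x.2.1, hxz, z.2.2, rfl, rfl⟩)
    have t1 : C (FreeMonoid.ofList [gQ n z, gQ n y, gQ n x])
        (FreeMonoid.ofList [gQ n z, colQ n x.1 y.1 x.2.1 hxy' y.2.2]) :=
      C.mul (C.refl (FreeMonoid.ofList [gQ n z])) u1
    have t2 : C (FreeMonoid.ofList [gQ n y, colQ n x.1 z.1 x.2.1 hxz z.2.2])
        (FreeMonoid.ofList [gQ n y, gQ n z, gQ n x]) :=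
      C.mul (C.refl (FreeMonoid.ofList [gQ n y])) (C.symm u3)
    exact C.trans (C.trans (C.trans t1 u2) t2) (C.refl _)

private lemma pres_A (n : ℕ) {x y z : ChLetter n} (hxy : x.1 ≤ y.1) (hyz : y.1 ≤ z.1) :
    presCon (PreColo n) (FreeMonoid.ofList [gQ n z, gQ n y, gQ n x])
      (FreeMonoid.ofList [gQ n z, gQ n x, gQ n y]) := by
  set C := presCon (PreColo n) with hC
  rcases eq_or_lt_of_le hxy with he | hxy'
  · have : x = y := Subtype.ext he
    subst this
    exact C.refl _
  rcases eq_or_lt_of_le hyz with he | hyz'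
  · have : y = z := Subtype.ext he
    subst this
    have hxz : x.1 < y.1 := hxy'
    have v1 : C (FreeMonoid.ofList [gQ n y, gQ n x])
        (FreeMonoid.ofList [colQ n x.1 y.1 x.2.1 hxz y.2.2]) :=
      ofRule (Or.inl ⟨x.1, y.1, x.2.1, hxz, y.2.2, rfl, rfl⟩)
    have v2 : C (FreeMonoid.ofList [gQ n y, colQ n x.1 y.1 x.2.1 hxz y.2.2])
        (FreeMonoid.ofList [colQ n x.1 y.1 x.2.1 hxz y.2.2, gQ n y]) :=
      ofRule (Or.inr (Or.inr (Or.inl ⟨x.1, y.1, x.2.1, hxz, y.2.2, rfl, rfl⟩)))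
    have t1 : C (FreeMonoid.ofList [gQ n y, gQ n y, gQ n x])
        (FreeMonoid.ofList [gQ n y, colQ n x.1 y.1 x.2.1 hxz y.2.2]) :=
      C.mul (C.refl (FreeMonoid.ofList [gQ n y])) v1
    have t2 : C (FreeMonoid.ofList [colQ n x.1 y.1 x.2.1 hxz y.2.2, gQ n y])
        (FreeMonoid.ofList [gQ n y, gQ n x, gQ n y]) :=
      C.mul (C.symm v1) (C.refl (FreeMonoid.ofList [gQ n y]))
    exact C.trans (C.trans t1 v2) t2
  · have hxz : x.1 < z.1 := Nat.lt_trans hxy' hyz'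
    have hg : genYX y.1 x.1 = colG y.1 x.1 := if_neg (by omega)
    have u1 : C (FreeMonoid.ofList [gQ n y, gQ n x])
        (FreeMonoid.ofList [colQ n x.1 y.1 x.2.1 hxy' y.2.2]) :=
      ofRule (Or.inl ⟨x.1, y.1, x.2.1, hxy', y.2.2, rfl, rfl⟩)
    have u2 : C (FreeMonoid.ofList [gQ n z, colQ n x.1 y.1 x.2.1 hxy' y.2.2])
        (FreeMonoid.ofList [gQ n y, colQ n x.1 z.1 x.2.1 hxz z.2.2]) := by
      refine ofRule (Or.inr (Or.inr (Or.inr (Or.inr (Or.inr (Or.inl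
        ⟨x.1, y.1, z.1, x.2.1, Nat.le_of_lt hxy', hyz', z.2.2, ?_, rfl⟩))))))
      rw [hg]
      rfl
    have u3 : C (FreeMonoid.ofList [gQ n z, gQ n x])
        (FreeMonoid.ofList [colQ n x.1 z.1 x.2.1 hxz z.2.2]) :=
      ofRule (Or.inl ⟨x.1, z.1, x.2.1, hxz, z.2.2, rfl, rfl⟩)
    have u4 : C (FreeMonoid.ofList [colQ n x.1 z.1 x.2.1 hxz z.2.2, gQ n y])
        (FreeMonoid.ofList [gQ n y, colQ n x.1 z.1 x.2.1 hxz z.2.2]) :=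
      ofRule (Or.inr (Or.inr (Or.inr (Or.inr (Or.inr (Or.inr
        ⟨x.1, y.1, z.1, x.2.1, hxy', hyz', z.2.2, rfl, rfl⟩))))))
    have lhs : C (FreeMonoid.ofList [gQ n z, gQ n y, gQ n x])
        (FreeMonoid.ofList [gQ n y, colQ n x.1 z.1 x.2.1 hxz z.2.2]) :=
      C.trans (C.mul (C.refl (FreeMonoid.ofList [gQ n z])) u1) u2
    have rhs : C (FreeMonoid.ofList [gQ n z, gQ n x, gQ n y])
        (FreeMonoid.ofList [gQ n y, colQ n x.1 z.1 x.2.1 hxz z.2.2]) :=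
      C.trans (C.mul u3 (C.refl (FreeMonoid.ofList [gQ n y]))) u4
    exact C.trans lhs (C.symm rhs)

private lemma psiF_one (n : ℕ) (a : ChLetter n) :
    psiF n (FreeMonoid.ofList [a]) = (presCon (PreColo n)).mk' (FreeMonoid.ofList [gQ n a]) := by
  show psiF n (FreeMonoid.of a) = _
  unfold psiF
  rw [FreeMonoid.lift_eval_of]
  rfl

private lemma psiF_two (n : ℕ) (a b : ChLetter n) :
    psiF n (FreeMonoid.ofList [a, b]) =
      (presCon (PreColo n)).mk' (FreeMonoid.ofList [gQ n a, gQ n b]) := by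
  show psiF n (FreeMonoid.of a * FreeMonoid.of b) = _
  rw [map_mul]
  unfold psiF
  rw [FreeMonoid.lift_eval_of, FreeMonoid.lift_eval_of, mk_mul]
  rfl

private lemma psiF_three (n : ℕ) (a b c : ChLetter n) :
    psiF n (FreeMonoid.ofList [a, b, c]) =
      (presCon (PreColo n)).mk' (FreeMonoid.ofList [gQ n a, gQ n b, gQ n c]) := by
  show psiF n (FreeMonoid.of a * FreeMonoid.of b * FreeMonoid.of c) = _
  rw [map_mul, map_mul]
  unfold psiF
  rw [FreeMonoid.lift_eval_of, FreeMonoid.lift_eval_of, FreeMonoid.lift_eval_of,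
    mk_mul, mk_mul]
  rfl

private lemma psi_resp (n : ℕ) : ChineseCon n ≤ Con.ker (psiF n) := by
  apply Con.conGen_le.mpr
  rintro u v ⟨x, y, z, hxy, hyz, (⟨rfl, rfl⟩ | ⟨rfl, rfl⟩)⟩ <;>
    rw [Con.ker_rel, psiF_three, psiF_three]
  · exact (Con.eq _).mpr (pres_A n hxy hyz)
  · exact (Con.eq _).mpr (pres_B n hxy hyz)

/-! ### The two induced morphisms and the isomorphism -/

private def PhiH (n : ℕ) (hn : 1 ≤ n) :
    (presCon (PreColo n)).Quotient →* (ChineseCon n).Quotient :=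
  Con.lift _ (phiF n hn) (phi_resp n hn)

private def PsiH (n : ℕ) :
    (ChineseCon n).Quotient →* (presCon (PreColo n)).Quotient :=
  Con.lift _ (psiF n) (psi_resp n)

private lemma Phi_mk (n : ℕ) (hn : 1 ≤ n) (w : FreeMonoid (QL n)) :
    PhiH n hn ((presCon (PreColo n)).mk' w) = phiF n hn w :=
  Con.lift_mk' _ _

private lemma Psi_mk (n : ℕ) (w : FreeMonoid (ChLetter n)) :
    PsiH n ((ChineseCon n).mk' w) = psiF n w :=
  Con.lift_mk' _ _

private lemma con_hom_ext {M N : Type*} [Monoid M] [Monoid N] {c : Con M}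
    {f g : c.Quotient →* N} (h : ∀ m, f (c.mk' m) = g (c.mk' m)) : f = g :=
  MonoidHom.ext fun q => by
    obtain ⟨m, rfl⟩ := Con.mk'_surjective q
    exact h m

private lemma comp1_gen (n : ℕ) (hn : 1 ≤ n) (x : ChLetter n) :
    PhiH n hn (PsiH n ((ChineseCon n).mk' (FreeMonoid.of x))) =
      (ChineseCon n).mk' (FreeMonoid.of x) := by
  rw [Psi_mk]
  show PhiH n hn (psiF n (FreeMonoid.of x)) = _
  unfold psiF
  rw [FreeMonoid.lift_eval_of, Phi_mk]
  show phiF n hn (FreeMonoid.of (gQ n x)) = _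
  unfold phiF
  rw [FreeMonoid.lift_eval_of]
  rw [fCh_cOf n hn (gQ n x) rfl x.2.1 x.2.2]
  rfl

private lemma comp2_gen (n : ℕ) (hn : 1 ≤ n) (c : QL n) :
    PsiH n (PhiH n hn ((presCon (PreColo n)).mk' (FreeMonoid.of c))) =
      (presCon (PreColo n)).mk' (FreeMonoid.of c) := by
  rw [Phi_mk]
  show PsiH n (phiF n hn (FreeMonoid.of c)) = _
  unfold phiF
  rw [FreeMonoid.lift_eval_of]
  rcases c.2 with ⟨x, y, hx, hxy, hyn, hc⟩ | ⟨x, hx, hxn, hc⟩ | ⟨x, hx1, hxn, hc⟩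
  · rw [fCh_colG n hn c hc hx hxy hyn, Psi_mk, psiF_two]
    have hv : List.map Subtype.val (FreeMonoid.toList (FreeMonoid.of c)) = [colG y x] := by
      show List.map Subtype.val [c] = [colG y x]
      rw [List.map_cons, List.map_nil, hc]
    exact (Con.eq _).mpr (ofRule (Or.inl ⟨x, y, hx, hxy, hyn, rfl, hv⟩))
  · rw [fCh_cOf n hn c hc hx hxn, Psi_mk, psiF_one]
    have : gQ n ⟨x, hx, hxn⟩ = c := Subtype.ext hc.symm
    rw [this]
    rfl
  · rw [fCh_sqG n hn c hc (by omega) (by omega), Psi_mk, psiF_two]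
    have hv : List.map Subtype.val (FreeMonoid.toList (FreeMonoid.of c)) = [sqG x] := by
      show List.map Subtype.val [c] = [sqG x]
      rw [List.map_cons, List.map_nil, hc]
    exact (Con.eq _).mpr (ofRule (Or.inr (Or.inl ⟨x, hx1, hxn, rfl, hv⟩)))

private lemma comp1 (n : ℕ) (hn : 1 ≤ n) :
    (PhiH n hn).comp (PsiH n) = MonoidHom.id _ := by
  apply con_hom_ext
  intro m
  have h : ((PhiH n hn).comp (PsiH n)).comp (ChineseCon n).mk' =
      (MonoidHom.id _).comp (ChineseCon n).mk' :=
    FreeMonoid.hom_eq fun x => comp1_gen n hn x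
  exact DFunLike.congr_fun h m

private lemma comp2 (n : ℕ) (hn : 1 ≤ n) :
    (PsiH n).comp (PhiH n hn) = MonoidHom.id _ := by
  apply con_hom_ext
  intro m
  have h : ((PsiH n).comp (PhiH n hn)).comp (presCon (PreColo n)).mk' =
      (MonoidHom.id _).comp (presCon (PreColo n)).mk' :=
    FreeMonoid.hom_eq fun c => comp2_gen n hn c
  exact DFunLike.congr_fun h m

end AuxPreColo2
/-- For every `n ≥ 1`, the rewriting system `PreColo_2(n)` on the alphabet
`Q_n` is a finite semi-quadratic presentation of the Chinese monoid `C_n`: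
every rule has source of length `2` and target of length at most `2`, and the
monoid presented by `PreColo_2(n)` is isomorphic to `C_n`. -/
theorem preColo_finite_semiquadratic_presentation (n : ℕ) (hn : 1 ≤ n) :
    (Qn n).Finite ∧
    {p : List (QL n) × List (QL n) | PreColo n p.1 p.2}.Finite ∧
    (∀ u v : List (QL n), PreColo n u v → u.length = 2 ∧ v.length ≤ 2) ∧
    Nonempty ((presCon (PreColo n)).Quotient ≃* (ChineseCon n).Quotient) := by
  have hQ : (Qn n).Finite := by
    have h1 : ((Set.Icc 1 n ×ˢ Set.Icc 1 n).image fun p : ℕ × ℕ => colG p.1 p.2).Finite :=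
      ((Set.finite_Icc 1 n).prod (Set.finite_Icc 1 n)).image _
    have h2 : ((Set.Icc 1 n).image sqG).Finite := (Set.finite_Icc 1 n).image _
    refine (h1.union h2).subset ?_
    rintro c (⟨x, y, hx, hxy, hyn, rfl⟩ | ⟨x, hx, hxn, rfl⟩ | ⟨x, hx1, hxn, rfl⟩)
    · exact Or.inl ⟨(y, x), ⟨⟨by omega, hyn⟩, ⟨hx, by omega⟩⟩, rfl⟩
    · exact Or.inl ⟨(x, x), ⟨⟨hx, hxn⟩, ⟨hx, hxn⟩⟩, rfl⟩
    · exact Or.inr ⟨x, ⟨by omega, by omega⟩, rfl⟩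
  have key2 : ∀ (a b : ℕ → ℕ → ℕ) (l : List (QL n)),
      l.map Subtype.val = [a, b] → l.length = 2 := by
    intro a b l hl
    have := congrArg List.length hl
    simpa using this
  have key1 : ∀ (a : ℕ → ℕ → ℕ) (l : List (QL n)),
      l.map Subtype.val = [a] → l.length = 1 := by
    intro a l hl
    have := congrArg List.length hl
    simpa using this
  have hlen : ∀ u v : List (QL n), PreColo n u v → u.length = 2 ∧ v.length ≤ 2 := by
    intro u v h
    rcases h with ⟨x, y, _, _, _, hu, hv⟩ | ⟨x, _, _, hu, hv⟩ |
      ⟨x, y, _, _, _, hu, hv⟩ | ⟨x, y, _, _, _, hu, hv⟩ |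
      ⟨x, y, z, _, _, _, _, hu, hv⟩ | ⟨x, y, z, _, _, _, _, hu, hv⟩ |
      ⟨x, y, z, _, _, _, _, hu, hv⟩
    · exact ⟨key2 _ _ _ hu, by rw [key1 _ _ hv]; omega⟩
    · exact ⟨key2 _ _ _ hu, by rw [key1 _ _ hv]; omega⟩
    · exact ⟨key2 _ _ _ hu, le_of_eq (key2 _ _ _ hv)⟩
    · exact ⟨key2 _ _ _ hu, le_of_eq (key2 _ _ _ hv)⟩
    · exact ⟨key2 _ _ _ hu, le_of_eq (key2 _ _ _ hv)⟩
    · exact ⟨key2 _ _ _ hu, le_of_eq (key2 _ _ _ hv)⟩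
    · exact ⟨key2 _ _ _ hu, le_of_eq (key2 _ _ _ hv)⟩
  refine ⟨hQ, ?_, hlen, ?_⟩
  · have hfin : Finite (QL n) := hQ.to_subtype
    have hsub : {p : List (QL n) × List (QL n) | PreColo n p.1 p.2} ⊆
        {l : List (QL n) | l.length ≤ 2} ×ˢ {l : List (QL n) | l.length ≤ 2} := by
      rintro ⟨u, v⟩ h
      obtain ⟨h1, h2⟩ := hlen u v h
      exact ⟨le_of_eq h1, h2⟩
    exact ((List.finite_length_le _ 2).prod (List.finite_length_le _ 2)).subset hsub
  · exact ⟨MonoidHom.toMulEquiv (PhiH n hn) (PsiH n) (comp2 n hn) (comp1 n hn)⟩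
end
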